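/- arXiv:2106.02600 — 2 statements merged into one kernel-verified Lean document; each statement's English description precedes it below -/
import Mathlib

section
/- Let g : ℝ → ℝ be differentiable with g'(x) ≥ m_g > 0 for all x, and let w_1, …, w_T be vectors in ℝ^N. Define the vector field F(θ) = (1/T) ∑_{t=1}^T w_t (g(w_tᵀθ) − c_t) for arbitrary constants c_t. Then F is monotone with modulus m_g·λ_1, where λ_1 is the smallest eigenvalue of the matrix W = (1/T) ∑_{t=1}^T w_t w_tᵀ; that is, (F(θ) − F(θ'))ᵀ(θ − θ') ≥ m_g·λ_1·‖θ − θ'‖₂² for all θ, θ' ∈ ℝ^N. -/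
open scoped RealInnerProductSpace BigOperators

lemma key_mono (g : ℝ → ℝ) (m_g : ℝ) (hg : Differentiable ℝ g)
    (hderiv : ∀ x, m_g ≤ deriv g x) :
    ∀ a b : ℝ, m_g * (a - b) ^ 2 ≤ (g a - g b) * (a - b) := by
  have main : ∀ a b : ℝ, b < a → m_g * (a - b) ^ 2 ≤ (g a - g b) * (a - b) := by
    intro a b hba
    obtain ⟨ξ, _, hξ⟩ := exists_deriv_eq_slope g hba
      (hg.continuous.continuousOn) (fun x _ => (hg x).differentiableWithinAt)
    have hab : (0:ℝ) < a - b := by linarith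
    have : g a - g b = deriv g ξ * (a - b) := by
      field_simp at hξ; linarith [hξ]
    rw [this]
    have := hderiv ξ
    nlinarith [sq_nonneg (a - b)]
  intro a b
  rcases lt_trichotomy a b with h | h | h
  · have := main b a h
    nlinarith [this]
  · simp [h]
  · exact main a b h

/-- Monotonicity modulus of the empirical GLM vector field (Lemma "Property I"). -/
theorem stmt_0 {N T : ℕ} (g : ℝ → ℝ) (m_g lam1 : ℝ)
    (hg : Differentiable ℝ g) (hm : 0 < m_g) (hderiv : ∀ x, m_g ≤ deriv g x)
    (w : Fin T → EuclideanSpace ℝ (Fin N)) (c : Fin T → ℝ)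
    (F : EuclideanSpace ℝ (Fin N) → EuclideanSpace ℝ (Fin N))
    (hF : ∀ θ, F θ = (T : ℝ)⁻¹ • ∑ t, (g ⟪w t, θ⟫ - c t) • w t)
    (hlam : ∀ v : EuclideanSpace ℝ (Fin N),
      lam1 * ‖v‖ ^ 2 ≤ (T : ℝ)⁻¹ * ∑ t, ⟪w t, v⟫ ^ 2) :
    ∀ θ θ' : EuclideanSpace ℝ (Fin N),
      m_g * lam1 * ‖θ - θ'‖ ^ 2 ≤ ⟪F θ - F θ', θ - θ'⟫ := by
  intro θ θ'
  set v := θ - θ' with hv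
  have hTnn : (0:ℝ) ≤ (T : ℝ)⁻¹ := by positivity
  have hinner : ⟪F θ - F θ', v⟫ =
      (T : ℝ)⁻¹ * ∑ t, (g ⟪w t, θ⟫ - g ⟪w t, θ'⟫) * ⟪w t, v⟫ := by
    rw [inner_sub_left, hF, hF, inner_smul_left, inner_smul_left,
      sum_inner, sum_inner]
    simp only [inner_smul_left, RCLike.conj_to_real, map_inv₀,
      starRingEnd_apply, star_trivial]
    rw [← mul_sub, ← Finset.sum_sub_distrib]
    congr 1
    apply Finset.sum_congr rfl
    intro t _
    ring
  rw [hinner]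
  have hstep : ∀ t : Fin T, m_g * ⟪w t, v⟫ ^ 2 ≤
      (g ⟪w t, θ⟫ - g ⟪w t, θ'⟫) * ⟪w t, v⟫ := by
    intro t
    have hsub : ⟪w t, v⟫ = ⟪w t, θ⟫ - ⟪w t, θ'⟫ := by
      rw [hv, inner_sub_right]
    rw [hsub]
    exact key_mono g m_g hg hderiv _ _
  calc m_g * lam1 * ‖v‖ ^ 2 = m_g * (lam1 * ‖v‖ ^ 2) := by ring
    _ ≤ m_g * ((T : ℝ)⁻¹ * ∑ t, ⟪w t, v⟫ ^ 2) :=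
        mul_le_mul_of_nonneg_left (hlam v) hm.le
    _ = (T : ℝ)⁻¹ * ∑ t, m_g * ⟪w t, v⟫ ^ 2 := by
        simp only [Finset.mul_sum]
        exact Finset.sum_congr rfl fun t _ => by ring
    _ ≤ (T : ℝ)⁻¹ * ∑ t, (g ⟪w t, θ⟫ - g ⟪w t, θ'⟫) * ⟪w t, v⟫ := by
        apply mul_le_mul_of_nonneg_left _ hTnn
        exact Finset.sum_le_sum fun t _ => hstep t
end

section
/- Let g : ℝ → ℝ satisfy (g(a) − g(b))(a − b) ≥ m_g (a − b)² for all a, b ∈ ℝ (e.g., g differentiable with g' ≥ m_g > 0). Let w_1, …, w_T ∈ ℝ^N and let λ_1 > 0 be the smallest eigenvalue of W = (1/T)∑_t w_t w_tᵀ. Suppose θ̂ and θ* are two points in ℝ^N, and define Δ = F(θ̂) − F(θ*) where F(θ) = (1/T)∑_t w_t g(w_tᵀθ). Then ‖θ̂ − θ*‖₂ ≤ ‖Δ‖₂ / (m_g λ_1). -/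
open scoped RealInnerProductSpace BigOperators

/-- Deterministic core of Theorem 1: strong monotonicity gives the error bound. -/
theorem stmt_1 {N T : ℕ} (g : ℝ → ℝ) (m_g lam1 : ℝ)
    (hg : ∀ a b : ℝ, m_g * (a - b) ^ 2 ≤ (g a - g b) * (a - b))
    (hm : 0 < m_g) (hlampos : 0 < lam1)
    (w : Fin T → EuclideanSpace ℝ (Fin N))
    (hlam : ∀ v : EuclideanSpace ℝ (Fin N),
      lam1 * ‖v‖ ^ 2 ≤ (T : ℝ)⁻¹ * ∑ t, ⟪w t, v⟫ ^ 2)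
    (F : EuclideanSpace ℝ (Fin N) → EuclideanSpace ℝ (Fin N))
    (hF : ∀ θ, F θ = (T : ℝ)⁻¹ • ∑ t, g ⟪w t, θ⟫ • w t)
    (θhat θstar Δ : EuclideanSpace ℝ (Fin N))
    (hΔ : Δ = F θhat - F θstar) :
    ‖θhat - θstar‖ ≤ ‖Δ‖ / (m_g * lam1) := by
  set v := θhat - θstar with hv
  have hkey : m_g * lam1 * ‖v‖ ^ 2 ≤ ⟪Δ, v⟫ := by
    have hinner : ⟪Δ, v⟫ =
        (T : ℝ)⁻¹ * ∑ t, (g ⟪w t, θhat⟫ - g ⟪w t, θstar⟫) * ⟪w t, v⟫ := by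
      rw [hΔ, hF, hF, ← smul_sub, ← Finset.sum_sub_distrib]
      rw [inner_smul_left, sum_inner]
      simp only [inner_sub_left, inner_smul_left, RCLike.star_def, starRingEnd_apply,
        star_trivial]
      simp only [Finset.mul_sum]
      apply Finset.sum_congr rfl
      intro t _
      ring
    have h1 : ∀ t, m_g * ⟪w t, v⟫ ^ 2 ≤
        (g ⟪w t, θhat⟫ - g ⟪w t, θstar⟫) * ⟪w t, v⟫ := by
      intro t
      have := hg ⟪w t, θhat⟫ ⟪w t, θstar⟫
      have hsub : ⟪w t, θhat⟫ - ⟪w t, θstar⟫ = ⟪w t, v⟫ := by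
        rw [hv, inner_sub_right]
      rwa [hsub] at this
    have hT : (0:ℝ) ≤ (T : ℝ)⁻¹ := by positivity
    calc m_g * lam1 * ‖v‖ ^ 2
        = m_g * (lam1 * ‖v‖ ^ 2) := by ring
      _ ≤ m_g * ((T : ℝ)⁻¹ * ∑ t, ⟪w t, v⟫ ^ 2) := by
          exact mul_le_mul_of_nonneg_left (hlam v) hm.le
      _ = (T : ℝ)⁻¹ * ∑ t, m_g * ⟪w t, v⟫ ^ 2 := by
          simp only [Finset.mul_sum]
          apply Finset.sum_congr rfl
          intro t _
          ring
      _ ≤ (T : ℝ)⁻¹ * ∑ t, (g ⟪w t, θhat⟫ - g ⟪w t, θstar⟫) * ⟪w t, v⟫ := by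
          apply mul_le_mul_of_nonneg_left _ hT
          exact Finset.sum_le_sum fun t _ => h1 t
      _ = ⟪Δ, v⟫ := hinner.symm
  have hcs : ⟪Δ, v⟫ ≤ ‖Δ‖ * ‖v‖ := real_inner_le_norm Δ v
  have hml : 0 < m_g * lam1 := mul_pos hm hlampos
  rw [le_div_iff₀ hml]
  show ‖v‖ * (m_g * lam1) ≤ ‖Δ‖
  rcases eq_or_lt_of_le (norm_nonneg v) with h0 | h0
  · rw [← h0]; simp [norm_nonneg]
  · have : m_g * lam1 * ‖v‖ ^ 2 ≤ ‖Δ‖ * ‖v‖ := hkey.trans hcs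
    nlinarith
end
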